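/- Let $s, t : \mathbb{N} \times \mathbb{N} \to \mathbb{R}$ be arbitrary functions and let $z : \mathbb{N} \times \mathbb{N} \to \mathbb{R}$ be nowhere vanishing and satisfy the linear lattice equation $s_{l,m} z_{l,m} - t_{l,m} z_{l+1,m} + z_{l,m+1} - z_{l+1,m+1} = 0$ for all $l, m \geq 0$. Define $u_{l,m} = z_{l,m+1} / z_{l,m}$ (the Cole–Hopf transformation). Then $u$ satisfies the quad-graph equation $u_{l,m}\,(u_{l,m+1} + s_{l,m+1})\,(u_{l+1,m} + t_{l,m}) = u_{l+1,m}\,(u_{l,m} + s_{l,m})\,(u_{l+1,m+1} + t_{l,m+1})$ for all $l, m \geq 0$. -/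

import Mathlib

/-- Linearization of the RJGT-type quad-graph equation: if `z` is a nowhere
vanishing solution of the linear lattice equation
`s z - t z₁ + z₂ - z₁₂ = 0`, then the Cole–Hopf transform `u (l,m) = z (l,m+1) / z (l,m)`
satisfies `u (u₂ + s₂)(u₁ + t) = u₁ (u + s)(u₁₂ + t₂)`. -/
theorem stmt_19 (s t z u : ℕ × ℕ → ℝ)
    (hz : ∀ l m : ℕ, z (l, m) ≠ 0)
    (hlin : ∀ l m : ℕ,
      s (l, m) * z (l, m) - t (l, m) * z (l + 1, m) + z (l, m + 1) - z (l + 1, m + 1) = 0)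
    (hu : ∀ l m : ℕ, u (l, m) = z (l, m + 1) / z (l, m)) :
    ∀ l m : ℕ,
      u (l, m) * (u (l, m + 1) + s (l, m + 1)) * (u (l + 1, m) + t (l, m)) =
        u (l + 1, m) * (u (l, m) + s (l, m)) * (u (l + 1, m + 1) + t (l, m + 1)) := by
  intro l m
  have h1 := hlin l m
  have h2 := hlin l (m + 1)
  have ha := hz l m
  have hb := hz (l + 1) m
  have hc := hz l (m + 1)
  have hd := hz (l + 1) (m + 1)
  have key : (z (l, m + 2) + s (l, m + 1) * z (l, m + 1)) *
      (z (l + 1, m + 1) + t (l, m) * z (l + 1, m)) =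
      (z (l, m + 1) + s (l, m) * z (l, m)) *
      (z (l + 1, m + 2) + t (l, m + 1) * z (l + 1, m + 1)) := by
    linear_combination (z (l + 1, m + 1) + t (l, m) * z (l + 1, m)) * h2 -
      (z (l + 1, m + 2) + t (l, m + 1) * z (l + 1, m + 1)) * h1
  have L : u (l, m) * (u (l, m + 1) + s (l, m + 1)) * (u (l + 1, m) + t (l, m)) =
      ((z (l, m + 2) + s (l, m + 1) * z (l, m + 1)) *
        (z (l + 1, m + 1) + t (l, m) * z (l + 1, m))) / (z (l, m) * z (l + 1, m)) := by
    simp only [hu]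
    field_simp
  have R : u (l + 1, m) * (u (l, m) + s (l, m)) * (u (l + 1, m + 1) + t (l, m + 1)) =
      ((z (l, m + 1) + s (l, m) * z (l, m)) *
        (z (l + 1, m + 2) + t (l, m + 1) * z (l + 1, m + 1))) / (z (l, m) * z (l + 1, m)) := by
    simp only [hu]
    field_simp
  rw [L, R, key]
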